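/- For a Hilbert C*-module M over a C*-algebra A and a bounded A-antilinear functional f in the dual module M', the set J_f = {a ∈ A : f·a ∈ M} is a closed right ideal in A. -/

import Mathlib

open scoped RightActions

/-- The Hilbert C⋆-module class as it stood in the older Mathlib (right `A`-action,
inner product `A`-linear in the second argument); Mathlib's `CStarModule` now uses a left action. -/
class CStarModuleRight (A E : Type*) [NonUnitalSemiring A] [StarRing A]
    [Module ℂ A] [AddCommGroup E] [Module ℂ E] [PartialOrder A] [SMul Aᵐᵒᵖ E] [Norm A] [Norm E]
    extends Inner A E where
  inner_add_right {x} {y} {z} : inner x (y + z) = inner x y + inner x z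
  inner_self_nonneg {x} : 0 ≤ inner x x
  inner_self {x} : inner x x = 0 ↔ x = 0
  inner_op_smul_right {a : A} {x y : E} : inner x (y <• a) = inner x y * a
  inner_smul_right_complex {z : ℂ} {x} {y} : inner x (z • y) = z • inner x y
  star_inner x y : star (inner x y) = inner y x
  norm_eq_sqrt_norm_inner_self x : ‖x‖ = √‖inner x x‖

section Defs

variable {A : Type*} [CStarAlgebra A] [PartialOrder A] [StarOrderedRing A]
variable {E : Type*} [NormedAddCommGroup E] [NormedSpace ℂ E] [SMul Aᵐᵒᵖ E] [CStarModuleRight A E]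

/-- Membership in the dual module `M'`: a bounded `A`-antilinear functional on `E`
(the functional `f` plays the role of `m ↦ ⟨m, f⟩`). -/
def IsDualFunctional (f : E → A) : Prop :=
  (∀ x y, f (x + y) = f x + f y) ∧
  (∀ (c : ℂ) (x : E), f (c • x) = (starRingEnd ℂ) c • f x) ∧
  (∀ (x : E) (a : A), f (x <• a) = star a * f x) ∧
  ∃ C : ℝ, ∀ x, ‖f x‖ ≤ C * ‖x‖

/-- The canonical image `m̂` of `m ∈ M` in the dual module: `m̂ x = ⟨x, m⟩`. -/
def mhat (m : E) : E → A := fun x => inner A x m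

/-- The right action of `A` on dual functionals: `f·a`. -/
def dualAct (f : E → A) (a : A) : E → A := fun x => f x * a

/-- The right ideal `J_f = {a ∈ A : f·a ∈ M}`. -/
def Jf (f : E → A) : Set A := {a : A | ∃ m : E, dualAct f a = mhat m}

/-- The right ideal `J_f` is essential in `A`. -/
def JfEssential (f : E → A) : Prop := ∀ a : A, (∀ j ∈ Jf f, a * j = 0) → a = 0

/-- The norm of a functional in the dual module (operator norm). -/
noncomputable def dualNorm (f : E → A) : ℝ :=
  sInf {C : ℝ | 0 ≤ C ∧ ∀ x, ‖f x‖ ≤ C * ‖x‖}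

end Defs

variable {A : Type*} [CStarAlgebra A] [PartialOrder A] [StarOrderedRing A]
variable {E : Type*} [NormedAddCommGroup E] [NormedSpace ℂ E] [SMul Aᵐᵒᵖ E] [CStarModuleRight A E]

lemma cmr_inner_sub_right (x y z : E) : inner A x (y - z) = inner A x y - inner A x z := by
  have := CStarModuleRight.inner_add_right (A := A) (x := x) (y := y - z) (z := z)
  rw [sub_add_cancel] at this
  rw [this]; abel

lemma cmr_inner_zero_right (x : E) : inner A x (0 : E) = 0 := by
  simpa using cmr_inner_sub_right (A := A) x 0 0

lemma cmr_inner_add_left (x y z : E) : inner A (x + y) z = inner A x z + inner A y z := by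
  rw [← CStarModuleRight.star_inner z, CStarModuleRight.inner_add_right, star_add,
    CStarModuleRight.star_inner, CStarModuleRight.star_inner]

lemma cmr_inner_sub_left (x y z : E) : inner A (x - y) z = inner A x z - inner A y z := by
  have := cmr_inner_add_left (A := A) (x - y) y z
  rw [sub_add_cancel] at this
  rw [this]; abel

lemma cmr_inner_op_smul_left (a : A) (x y : E) : inner A (x <• a) y = star a * inner A x y := by
  rw [← CStarModuleRight.star_inner y, CStarModuleRight.inner_op_smul_right, star_mul,
    CStarModuleRight.star_inner]

lemma cmr_inner_smul_right_real (r : ℝ) (x y : E) : inner A x (r • y) = r • inner A x y := by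
  have h : r • y = (r : ℂ) • y := by simp
  rw [h, CStarModuleRight.inner_smul_right_complex]
  simp

lemma cmr_inner_smul_left_real (r : ℝ) (x y : E) : inner A (r • x) y = r • inner A x y := by
  rw [← CStarModuleRight.star_inner y, cmr_inner_smul_right_real, star_smul,
    CStarModuleRight.star_inner]
  simp

lemma cmr_norm_sq_eq (x : E) : ‖x‖ ^ 2 = ‖inner A x x‖ := by
  rw [CStarModuleRight.norm_eq_sqrt_norm_inner_self (A := A) x, Real.sq_sqrt (norm_nonneg _)]

lemma cmr_inner_swap_le (x y : E) :
    inner A y x * inner A x y ≤ ‖x‖ ^ 2 • inner A y y := by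
  rcases eq_or_ne x 0 with h | h
  · subst h
    rw [cmr_inner_zero_right]
    simp
  · set t := ‖x‖ ^ 2 with ht
    have htpos : 0 < t := by positivity
    set a := inner A x y with ha
    have hsa : star a = inner A y x := CStarModuleRight.star_inner x y
    have h0 : (0 : A) ≤ inner A (x <• a - t • y) (x <• a - t • y) :=
      CStarModuleRight.inner_self_nonneg
    have hexp : inner A (x <• a - t • y) (x <• a - t • y) = star a * inner A x x * a
        - t • (star a * inner A x y) - t • (inner A y x * a) + t • t • inner A y y := by
      simp only [cmr_inner_sub_left, cmr_inner_sub_right, cmr_inner_op_smul_left,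
        CStarModuleRight.inner_op_smul_right, cmr_inner_smul_left_real,
        cmr_inner_smul_right_real, sub_mul, mul_sub, smul_sub, smul_mul_assoc, mul_smul_comm,
        mul_assoc]
      abel
    have hP : star a * inner A x x * a ≤ t • (star a * a) := by
      rw [ht, cmr_norm_sq_eq (A := A) x]
      exact CStarAlgebra.star_left_conjugate_le_norm_smul (CStarModuleRight.star_inner x x)
    rw [hexp, ← ha, hsa] at h0
    rw [hsa] at hP
    have key : (0 : A) ≤ t • (t • inner A y y - inner A y x * a) := by
      have := add_nonneg h0 (sub_nonneg.mpr hP)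
      convert this using 1
      simp only [smul_sub]
      abel
    rw [← sub_nonneg]
    have := smul_nonneg (inv_nonneg.mpr htpos.le) key
    rwa [smul_smul, inv_mul_cancel₀ htpos.ne', one_smul] at this

lemma cmr_norm_inner_le (x y : E) : ‖inner A x y‖ ≤ ‖x‖ * ‖y‖ := by
  have hsa : star (inner A x y) = inner A y x := CStarModuleRight.star_inner x y
  have := calc ‖inner A x y‖ ^ 2 = ‖inner A y x * inner A x y‖ := by
                rw [← hsa, CStarRing.norm_star_mul_self, pow_two]
    _ ≤ ‖‖x‖ ^ 2 • inner A y y‖ := by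
                refine CStarAlgebra.norm_le_norm_of_nonneg_of_le ?_ (cmr_inner_swap_le x y)
                rw [← hsa]
                exact star_mul_self_nonneg _
    _ = ‖x‖ ^ 2 * ‖inner A y y‖ := by simp [norm_smul]
    _ = (‖x‖ * ‖y‖) ^ 2 := by rw [← cmr_norm_sq_eq (A := A) y]; ring
  exact (pow_le_pow_iff_left₀ (norm_nonneg _) (by positivity) (by simp)).mp this

lemma cmr_continuous_inner (x : E) : Continuous (fun y : E => inner A x y) :=
  AddMonoidHomClass.continuous_of_bound
    (AddMonoidHom.mk' (fun y : E => inner A x y) (fun _ _ => CStarModuleRight.inner_add_right))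
    ‖x‖ (fun y => cmr_norm_inner_le x y)

theorem Jf_isClosed_rightIdeal [CompleteSpace E] (f : E → A) (hf : IsDualFunctional f) :
    IsClosed (Jf f) ∧
    (0 : A) ∈ Jf f ∧
    (∀ a ∈ Jf f, ∀ b ∈ Jf f, a + b ∈ Jf f) ∧
    (∀ (c : ℂ), ∀ a ∈ Jf f, c • a ∈ Jf f) ∧
    (∀ a ∈ Jf f, ∀ b : A, a * b ∈ Jf f) := by
  obtain ⟨hadd, hsmul, hmod, C0, hC0⟩ := hf
  set C := max C0 0 with hCdef
  have hCnn : 0 ≤ C := le_max_right _ _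
  have hC : ∀ x, ‖f x‖ ≤ C * ‖x‖ := fun x =>
    (hC0 x).trans (mul_le_mul_of_nonneg_right (le_max_left _ _) (norm_nonneg x))
  have hsub : ∀ x y : E, f (x - y) = f x - f y := by
    intro x y
    have := hadd (x - y) y
    rw [sub_add_cancel] at this
    rw [this]; abel
  refine ⟨?_, ⟨0, ?_⟩, ?_, ?_, ?_⟩
  · -- closedness
    rw [← isSeqClosed_iff_isClosed]
    intro u a hu hlim
    choose m hm using hu
    -- the key estimate : ‖m n - m k‖ ≤ C * ‖u n - u k‖
    have key : ∀ n k : ℕ, ‖m n - m k‖ ≤ C * ‖u n - u k‖ := by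
      intro n k
      set d := m n - m k with hd
      have h1 : inner A d d = f d * (u n - u k) := by
        have hn := congrFun (hm n) d
        have hk := congrFun (hm k) d
        simp only [dualAct, mhat] at hn hk
        rw [hd, cmr_inner_sub_right, ← hn, ← hk, mul_sub]
      have h2 : ‖d‖ ^ 2 ≤ (C * ‖u n - u k‖) * ‖d‖ := by
        calc ‖d‖ ^ 2 = ‖inner A d d‖ := cmr_norm_sq_eq d
          _ = ‖f d * (u n - u k)‖ := by rw [h1]
          _ ≤ ‖f d‖ * ‖u n - u k‖ := norm_mul_le _ _
          _ ≤ (C * ‖d‖) * ‖u n - u k‖ :=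
              mul_le_mul_of_nonneg_right (hC d) (norm_nonneg _)
          _ = (C * ‖u n - u k‖) * ‖d‖ := by ring
      rcases eq_or_lt_of_le (norm_nonneg d) with h0 | h0
      · rw [← h0]; positivity
      · nlinarith [h2]
    -- m is Cauchy
    have hcu : CauchySeq u := hlim.cauchySeq
    have hcm : CauchySeq m := by
      rw [Metric.cauchySeq_iff] at hcu ⊢
      intro ε hε
      obtain ⟨N, hN⟩ := hcu (ε / (C + 1)) (by positivity)
      refine ⟨N, fun n hn k hk => ?_⟩
      have h1 := hN n hn k hk
      have h2 := key n k
      rw [dist_eq_norm] at *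
      calc ‖m n - m k‖ ≤ C * ‖u n - u k‖ := h2
        _ ≤ C * (ε / (C + 1)) := by
            exact mul_le_mul_of_nonneg_left h1.le hCnn
        _ < ε := by
            rw [mul_div_assoc'] ; rw [div_lt_iff₀ (by positivity)]
            nlinarith
    obtain ⟨mlim, hmlim⟩ := cauchySeq_tendsto_of_complete hcm
    refine ⟨mlim, ?_⟩
    funext x
    have t1 : Filter.Tendsto (fun n => f x * u n) Filter.atTop (nhds (f x * a)) :=
      Filter.Tendsto.mul tendsto_const_nhds hlim
    have t2 : Filter.Tendsto (fun n => inner A x (m n)) Filter.atTop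
        (nhds (inner A x mlim)) := by
      have : Continuous (fun y : E => inner A x y) :=
        cmr_continuous_inner x
      exact (this.tendsto mlim).comp hmlim
    have heq : (fun n => f x * u n) = fun n => inner A x (m n) := by
      funext n
      exact congrFun (hm n) x
    rw [heq] at t1
    exact tendsto_nhds_unique t1 t2
  · -- 0 ∈ Jf
    funext x
    simp [dualAct, mhat, cmr_inner_zero_right]
  · -- addition
    rintro a ⟨m, hm⟩ b ⟨m', hm'⟩
    refine ⟨m + m', ?_⟩
    funext x
    have h1 := congrFun hm x
    have h2 := congrFun hm' x
    simp only [dualAct, mhat] at *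
    rw [mul_add, h1, h2, CStarModuleRight.inner_add_right]
  · -- complex scalar multiplication
    rintro c a ⟨m, hm⟩
    refine ⟨c • m, ?_⟩
    funext x
    have h1 := congrFun hm x
    simp only [dualAct, mhat] at *
    rw [mul_smul_comm, h1, CStarModuleRight.inner_smul_right_complex]
  · -- right multiplication
    rintro a ⟨m, hm⟩ b
    refine ⟨m <• b, ?_⟩
    funext x
    have h1 := congrFun hm x
    simp only [dualAct, mhat] at *
    rw [← mul_assoc, h1, CStarModuleRight.inner_op_smul_right]
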